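/- arXiv:1509.04043 — 2 statements merged into one kernel-verified Lean document; each statement's English description precedes it below -/
import Mathlib

section
/- Let M ≥ 1, let H be an M×M Hermitian positive-definite complex matrix and R an M×M Hermitian positive-definite complex matrix, and let α > 0, β > 0. Let m₀ < M₀ be the smallest and largest eigenvalues of H, and m₁ < M₁ the smallest and largest eigenvalues of the Hermitian matrix R^{−1/2} H R^{−1/2}. Define f₀(x) = α·log x, f₁(x) = β·(log x + eˣ·E₁(x)), κ₁ = (f₀(M₀) − f₀(m₀))/(M₀ − m₀), κ₂ = f₀(m₀) − κ₁·m₀, μ₁ = (f₁(M₁) − f₁(m₁))/(M₁ − m₁), μ₂ = f₁(m₁) − μ₁·m₁. Then for every w ∈ ℂ^M with ‖w‖ = 1, f₀(w^H H w) + f₁((w^H H w)/(w^H R w)) ≥ κ₁·(w^H H w) + κ₂ + μ₁·((w^H H w)/(w^H R w)) + μ₂. -/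
open Matrix
open scoped ComplexOrder
open MeasureTheory Set
set_option maxHeartbeats 1600000

/-- The square root of a positive semidefinite matrix, as defined in the older Mathlib
(removed since): `U * diagonal (√λ) * Uᴴ` for the eigendecomposition of `A`. -/
noncomputable def Matrix.PosSemidef.sqrt {n : Type*} [Fintype n] [DecidableEq n]
    {A : Matrix n n ℂ} (hA : A.PosSemidef) : Matrix n n ℂ :=
  hA.1.eigenvectorUnitary.1 * diagonal ((↑) ∘ (fun i => Real.sqrt (hA.1.eigenvalues i))) *
    (star hA.1.eigenvectorUnitary : Matrix n n ℂ)

/-- The exponential integral function `E₁(x) = ∫ₓ^∞ e^{−t}/t dt`. -/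
noncomputable def expIntegralE1 (x : ℝ) : ℝ := ∫ t in Set.Ioi x, Real.exp (-t) / t

lemma E1_integrableOn {a : ℝ} (ha : 0 < a) :
    IntegrableOn (fun t => Real.exp (-t) / t) (Set.Ioi a) := by
  have h : IntegrableOn (fun t => Real.exp (-t) / a) (Set.Ioi a) := by
    have := (exp_neg_integrableOn_Ioi a one_pos).div_const a
    simp at this
    exact this
  refine h.integrable.mono ?_ ?_
  · exact ((Real.measurable_exp.comp measurable_neg).div measurable_id).aestronglyMeasurable
  · refine (ae_restrict_iff' measurableSet_Ioi).2 (ae_of_all _ fun t ht => ?_)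
    have ht' : a < t := ht
    have h1 : 0 < t := ha.trans ht'
    rw [Real.norm_eq_abs, Real.norm_eq_abs, abs_of_nonneg (by positivity),
      abs_of_nonneg (by positivity)]
    exact div_le_div_of_nonneg_left (Real.exp_pos _).le ha ht'.le

lemma E1_split {a b : ℝ} (ha : 0 < a) (hab : a ≤ b) :
    expIntegralE1 a = (∫ t in Set.Ioc a b, Real.exp (-t) / t) + expIntegralE1 b := by
  have hb : 0 < b := ha.trans_le hab
  rw [expIntegralE1, expIntegralE1, ← Set.Ioc_union_Ioi_eq_Ioi hab,
    setIntegral_union Set.Ioc_disjoint_Ioi_same measurableSet_Ioi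
      ((E1_integrableOn ha).mono_set Set.Ioc_subset_Ioi_self) (E1_integrableOn hb)]

lemma E1_hasDerivAt {x : ℝ} (hx : 0 < x) :
    HasDerivAt expIntegralE1 (-(Real.exp (-x) / x)) x := by
  set c := x / 2 with hc
  have hc0 : 0 < c := half_pos hx
  have hcx : c < x := half_lt_self hx
  have hint : IntervalIntegrable (fun t => Real.exp (-t) / t) volume c x :=
    (intervalIntegrable_iff_integrableOn_Ioc_of_le hcx.le).2
      ((E1_integrableOn hc0).mono_set Set.Ioc_subset_Ioi_self)
  have hcont : ContinuousAt (fun t => Real.exp (-t) / t) x :=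
    ((Real.continuous_exp.comp continuous_neg).continuousAt).div continuousAt_id hx.ne'
  have hmeas : StronglyMeasurableAtFilter (fun t => Real.exp (-t) / t) (nhds x) :=
    ⟨Set.univ, Filter.univ_mem,
      ((Real.measurable_exp.comp measurable_neg).div measurable_id).aestronglyMeasurable⟩
  have hd := intervalIntegral.integral_hasDerivAt_right hint hmeas hcont
  have hd2 : HasDerivAt (fun u => expIntegralE1 c - ∫ t in c..u, Real.exp (-t) / t)
      (-(Real.exp (-x) / x)) x := by
    simpa using hd.const_sub (expIntegralE1 c)
  refine hd2.congr_of_eventuallyEq ?_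
  filter_upwards [eventually_gt_nhds hcx] with y hy
  rw [intervalIntegral.integral_of_le hy.le, E1_split hc0 hy.le]
  ring

lemma E1_nonneg {x : ℝ} (hx : 0 < x) : 0 ≤ expIntegralE1 x :=
  setIntegral_nonneg measurableSet_Ioi fun t ht =>
    div_nonneg (Real.exp_pos _).le (hx.trans ht).le

lemma E1_le {x : ℝ} (hx : 0 < x) : expIntegralE1 x ≤ Real.exp (-x) / x := by
  have h2 : IntegrableOn (fun t => Real.exp (-t) / x) (Set.Ioi x) := by
    have := (exp_neg_integrableOn_Ioi x one_pos).div_const x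
    simp at this
    exact this
  have h1 : expIntegralE1 x ≤ ∫ t in Set.Ioi x, Real.exp (-t) / x := by
    refine setIntegral_mono_on (E1_integrableOn hx) h2 measurableSet_Ioi fun t ht => ?_
    have ht' : x < t := ht
    exact div_le_div_of_nonneg_left (Real.exp_pos _).le hx ht'.le
  calc expIntegralE1 x ≤ ∫ t in Set.Ioi x, Real.exp (-t) / x := h1
    _ = (∫ t in Set.Ioi x, Real.exp (-t)) / x := by rw [integral_div]
    _ = Real.exp (-x) / x := by rw [integral_exp_neg_Ioi]

lemma exp_mul_exp_neg_div (x : ℝ) : Real.exp x * (Real.exp (-x) / x) = 1 / x := by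
  rw [← mul_div_assoc, ← Real.exp_add]; simp

lemma psi_hasDerivAt {x : ℝ} (hx : 0 < x) :
    HasDerivAt (fun y => Real.exp y * expIntegralE1 y)
      (Real.exp x * expIntegralE1 x - 1 / x) x := by
  have h := (Real.hasDerivAt_exp x).mul (E1_hasDerivAt hx)
  refine h.congr_deriv ?_
  rw [mul_neg, exp_mul_exp_neg_div]
  ring

lemma psi_antitoneOn : AntitoneOn (fun x => Real.exp x * expIntegralE1 x) (Set.Ioi 0) := by
  refine antitoneOn_of_deriv_nonpos (convex_Ioi 0) ?_ ?_ ?_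
  · exact fun x hx => (psi_hasDerivAt hx).continuousAt.continuousWithinAt
  · rw [interior_Ioi]
    exact fun x hx => (psi_hasDerivAt hx).differentiableAt.differentiableWithinAt
  · rw [interior_Ioi]
    intro x hx
    rw [(psi_hasDerivAt hx).deriv, sub_nonpos]
    calc Real.exp x * expIntegralE1 x ≤ Real.exp x * (Real.exp (-x) / x) := by
          exact mul_le_mul_of_nonneg_left (E1_le hx) (Real.exp_pos _).le
      _ = 1 / x := exp_mul_exp_neg_div x

lemma phi_hasDerivAt {x : ℝ} (hx : 0 < x) :
    HasDerivAt (fun y => Real.log y + Real.exp y * expIntegralE1 y)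
      (Real.exp x * expIntegralE1 x) x := by
  have h := (Real.hasDerivAt_log hx.ne').add (psi_hasDerivAt hx)
  refine h.congr_deriv ?_
  rw [one_div]
  ring

lemma phi_concaveOn :
    ConcaveOn ℝ (Set.Ioi 0) (fun x => Real.log x + Real.exp x * expIntegralE1 x) := by
  refine AntitoneOn.concaveOn_of_deriv (convex_Ioi 0) ?_ ?_ ?_
  · exact fun x hx => (phi_hasDerivAt hx).continuousAt.continuousWithinAt
  · rw [interior_Ioi]
    exact fun x hx => (phi_hasDerivAt hx).differentiableAt.differentiableWithinAt
  · rw [interior_Ioi]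
    intro x hx y hy hxy
    rw [(phi_hasDerivAt hx).deriv, (phi_hasDerivAt hy).deriv]
    exact psi_antitoneOn hx hy hxy

/-- Chord lower bound for a concave function. -/
lemma concave_chord_le {f : ℝ → ℝ} {s : Set ℝ} (hf : ConcaveOn ℝ s f) {m M t : ℝ}
    (hm : m ∈ s) (hMs : M ∈ s) (hlt : m < M) (h1 : m ≤ t) (h2 : t ≤ M) :
    (f M - f m) / (M - m) * t + (f m - (f M - f m) / (M - m) * m) ≤ f t := by
  have hMm : (0:ℝ) < M - m := sub_pos.2 hlt
  set a := (M - t) / (M - m) with ha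
  set b := (t - m) / (M - m) with hb
  have ha0 : 0 ≤ a := div_nonneg (sub_nonneg.2 h2) hMm.le
  have hb0 : 0 ≤ b := div_nonneg (sub_nonneg.2 h1) hMm.le
  have hab : a + b = 1 := by
    rw [ha, hb, ← add_div, div_eq_one_iff_eq hMm.ne']
    ring
  have hkey : a • m + b • M = t := by
    rw [smul_eq_mul, smul_eq_mul, ha, hb, div_mul_eq_mul_div, div_mul_eq_mul_div,
      ← add_div, div_eq_iff hMm.ne']
    ring
  have h := hf.2 hm hMs ha0 hb0 hab
  rw [hkey, smul_eq_mul, smul_eq_mul] at h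
  refine le_trans (le_of_eq ?_) h
  rw [ha, hb]
  field_simp
  ring

lemma dot_star_self_re {n : ℕ} (x : Fin n → ℂ) :
    (star x ⬝ᵥ x).re = ∑ i, ‖x i‖ ^ 2 := by
  rw [dotProduct, Complex.re_sum]
  refine Finset.sum_congr rfl fun i _ => ?_
  simp only [Pi.star_apply, Complex.star_def, Complex.mul_re, Complex.conj_re, Complex.conj_im,
    Complex.sq_norm, Complex.normSq_apply]
  ring

lemma rayleigh_bounds {n : ℕ} (hn : 1 ≤ n) {A : Matrix (Fin n) (Fin n) ℂ} (hA : A.IsHermitian)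
    (v : Fin n → ℂ) :
    (⨅ i, hA.eigenvalues i) * ∑ i, ‖v i‖ ^ 2 ≤ (star v ⬝ᵥ A.mulVec v).re ∧
      (star v ⬝ᵥ A.mulVec v).re ≤ (⨆ i, hA.eigenvalues i) * ∑ i, ‖v i‖ ^ 2 := by
  have hne : Nonempty (Fin n) := ⟨⟨0, by omega⟩⟩
  set U : Matrix (Fin n) (Fin n) ℂ := (Matrix.IsHermitian.eigenvectorUnitary hA :
    Matrix (Fin n) (Fin n) ℂ) with hU
  set x : Fin n → ℂ := star U *ᵥ v with hxdef
  have hstar : star x = star v ᵥ* U := by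
    rw [hxdef, star_mulVec, star_eq_conjTranspose, conjTranspose_conjTranspose]
  have hcoe : ∀ r : ℝ, (RCLike.ofReal r : ℂ) = (r : ℂ) := fun r => rfl
  have hq : star v ⬝ᵥ A *ᵥ v =
      star x ⬝ᵥ (diagonal (RCLike.ofReal ∘ hA.eigenvalues)) *ᵥ x := by
    conv_lhs => rw [hA.spectral_theorem, Unitary.conjStarAlgAut_apply]
    rw [← mulVec_mulVec, dotProduct_mulVec, ← vecMul_vecMul, ← hU, ← hstar, ← hxdef,
      ← dotProduct_mulVec]
  have hqre : (star v ⬝ᵥ A *ᵥ v).re = ∑ i, hA.eigenvalues i * Complex.normSq (x i) := by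
    rw [hq, dotProduct, Complex.re_sum]
    refine Finset.sum_congr rfl fun i _ => ?_
    rw [mulVec_diagonal, Function.comp_apply, hcoe]
    simp only [Pi.star_apply, Complex.star_def, Complex.mul_re, Complex.mul_im, Complex.conj_re,
      Complex.conj_im, Complex.ofReal_re, Complex.ofReal_im, Complex.normSq_apply]
    ring
  have hUU : U * star U = 1 := mem_unitaryGroup_iff.mp hA.eigenvectorUnitary.2
  have hnorm : ∑ i, ‖x i‖ ^ 2 = ∑ i, ‖v i‖ ^ 2 := by
    rw [← dot_star_self_re, ← dot_star_self_re]
    have h2 : star x ⬝ᵥ x = star v ⬝ᵥ v := by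
      conv_lhs => rw [hstar, hxdef, ← dotProduct_mulVec, mulVec_mulVec, hUU, one_mulVec]
    rw [h2]
  have hnn : ∀ i, (0:ℝ) ≤ Complex.normSq (x i) := fun i => Complex.normSq_nonneg _
  have habs : ∀ i, ‖x i‖ ^ 2 = Complex.normSq (x i) := fun i => Complex.sq_norm _
  constructor
  · calc (⨅ i, hA.eigenvalues i) * ∑ i, ‖v i‖ ^ 2
        = ∑ i, (⨅ j, hA.eigenvalues j) * Complex.normSq (x i) := by
          rw [← hnorm, Finset.mul_sum]
          exact Finset.sum_congr rfl fun i _ => by rw [habs]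
      _ ≤ ∑ i, hA.eigenvalues i * Complex.normSq (x i) :=
          Finset.sum_le_sum fun i _ => mul_le_mul_of_nonneg_right
            (ciInf_le (Set.Finite.bddBelow (Set.finite_range _)) i) (hnn i)
      _ = (star v ⬝ᵥ A.mulVec v).re := hqre.symm
  · calc (star v ⬝ᵥ A.mulVec v).re
        = ∑ i, hA.eigenvalues i * Complex.normSq (x i) := hqre
      _ ≤ ∑ i, (⨆ j, hA.eigenvalues j) * Complex.normSq (x i) :=
          Finset.sum_le_sum fun i _ => mul_le_mul_of_nonneg_right
            (le_ciSup (Set.Finite.bddAbove (Set.finite_range _)) i) (hnn i)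
      _ = (⨆ i, hA.eigenvalues i) * ∑ i, ‖v i‖ ^ 2 := by
          rw [← hnorm, Finset.mul_sum]
          exact Finset.sum_congr rfl fun i _ => by rw [habs]

lemma sqrt_isHermitian' {n : Type*} [Fintype n] [DecidableEq n] {A : Matrix n n ℂ}
    (hA : A.PosSemidef) : hA.sqrt.IsHermitian := by
  unfold Matrix.PosSemidef.sqrt
  rw [star_eq_conjTranspose]
  refine isHermitian_mul_mul_conjTranspose _ ?_
  rw [IsHermitian, diagonal_conjTranspose]
  congr 1
  funext i
  simp

lemma sqrt_mul_self' {n : Type*} [Fintype n] [DecidableEq n] {A : Matrix n n ℂ}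
    (hA : A.PosSemidef) : hA.sqrt * hA.sqrt = A := by
  unfold Matrix.PosSemidef.sqrt
  set U : Matrix n n ℂ := (hA.1.eigenvectorUnitary : Matrix n n ℂ) with hU
  set D : Matrix n n ℂ := diagonal ((↑) ∘ (fun i => Real.sqrt (hA.1.eigenvalues i))) with hD
  have hUU : star U * U = 1 := mem_unitaryGroup_iff'.mp hA.1.eigenvectorUnitary.2
  conv_rhs => rw [hA.1.spectral_theorem, Unitary.conjStarAlgAut_apply]
  rw [show U * D * star U * (U * D * star U) = U * (D * (star U * U) * D) * star U by
    simp only [mul_assoc], hUU, mul_one, hD, diagonal_mul_diagonal, hU]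
  congr 3
  funext i
  simp only [Function.comp_apply]
  rw [← Complex.ofReal_mul, Real.mul_self_sqrt (hA.eigenvalues_nonneg i)]
  rfl

/-- Lemma 4 (chord lower bound): with `H, R` Hermitian positive definite, `f₀(x) = α log x`,
`f₁(x) = β (log x + eˣ E₁(x))`, `m₀ < M₀` the extreme eigenvalues of `H` and `m₁ < M₁` those of
`R^{−1/2} H R^{−1/2}`, and `κ₁, κ₂, μ₁, μ₂` the chord coefficients of `f₀` on `[m₀, M₀]` and of
`f₁` on `[m₁, M₁]`, every unit vector `w` satisfies
`f₀(w^H H w) + f₁((w^H H w)/(w^H R w)) ≥ κ₁ (w^H H w) + κ₂ + μ₁ (w^H H w)/(w^H R w) + μ₂`. -/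
theorem chord_lower_bound_beamforming_objective
    {M : ℕ} (hM : 1 ≤ M) (H R : Matrix (Fin M) (Fin M) ℂ)
    (hH : H.PosDef) (hR : R.PosDef) (α β : ℝ) (hα : 0 < α) (hβ : 0 < β)
    (C : Matrix (Fin M) (Fin M) ℂ)
    (hC : C = hR.posSemidef.sqrt⁻¹ * H * hR.posSemidef.sqrt⁻¹)
    (hCherm : C.IsHermitian)
    (m₀ M₀ m₁ M₁ : ℝ)
    (hm₀ : m₀ = ⨅ i, hH.1.eigenvalues i) (hM₀ : M₀ = ⨆ i, hH.1.eigenvalues i)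
    (hm₁ : m₁ = ⨅ i, hCherm.eigenvalues i) (hM₁ : M₁ = ⨆ i, hCherm.eigenvalues i)
    (h₀lt : m₀ < M₀) (h₁lt : m₁ < M₁)
    (f₀ f₁ : ℝ → ℝ)
    (hf₀ : ∀ x, f₀ x = α * Real.log x)
    (hf₁ : ∀ x, f₁ x = β * (Real.log x + Real.exp x * expIntegralE1 x))
    (κ₁ κ₂ μ₁ μ₂ : ℝ)
    (hκ₁ : κ₁ = (f₀ M₀ - f₀ m₀) / (M₀ - m₀)) (hκ₂ : κ₂ = f₀ m₀ - κ₁ * m₀)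
    (hμ₁ : μ₁ = (f₁ M₁ - f₁ m₁) / (M₁ - m₁)) (hμ₂ : μ₂ = f₁ m₁ - μ₁ * m₁)
    (w : Fin M → ℂ) (hw : ∑ i, ‖w i‖ ^ 2 = 1) :
    f₀ ((star w ⬝ᵥ H.mulVec w).re) +
        f₁ ((star w ⬝ᵥ H.mulVec w).re / (star w ⬝ᵥ R.mulVec w).re) ≥
      κ₁ * (star w ⬝ᵥ H.mulVec w).re + κ₂ +
        μ₁ * ((star w ⬝ᵥ H.mulVec w).re / (star w ⬝ᵥ R.mulVec w).re) + μ₂ := by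
  have hne : Nonempty (Fin M) := ⟨⟨0, by omega⟩⟩
  have hw0 : w ≠ 0 := by
    intro h
    rw [h] at hw
    simp at hw
  set S := hR.posSemidef.sqrt with hS
  have hSherm : S.IsHermitian := sqrt_isHermitian' hR.posSemidef
  have hSS : S * S = R := sqrt_mul_self' hR.posSemidef
  have hRdet : R.det ≠ 0 := hR.det_pos.ne'
  have hdS : IsUnit S.det := isUnit_iff_ne_zero.2 fun h => hRdet (by rw [← hSS, det_mul, h, mul_zero])
  have hinv : S⁻¹ * S = 1 := nonsing_inv_mul S hdS
  have hinv' : S * S⁻¹ = 1 := mul_nonsing_inv S hdS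
  have hSinvherm : (S⁻¹).IsHermitian := hSherm.inv
  set u := S *ᵥ w with hu
  have hstaru : star u = star w ᵥ* S := by
    rw [hu, star_mulVec, hSherm.eq]
  have hqC : star u ⬝ᵥ C *ᵥ u = star w ⬝ᵥ H *ᵥ w := by
    rw [hu, mulVec_mulVec, hC]
    have h1 : S⁻¹ * H * S⁻¹ * S = S⁻¹ * H := by
      rw [mul_assoc, hinv, mul_one]
    rw [h1, hstaru, dotProduct_mulVec, vecMul_vecMul, ← mul_assoc, hinv', one_mul,
      ← dotProduct_mulVec]
  have hqRu : star u ⬝ᵥ u = star w ⬝ᵥ R *ᵥ w := by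
    rw [hstaru, hu, ← dotProduct_mulVec, mulVec_mulVec, hSS]
  have hCpos : C.PosDef := by
    refine PosDef.of_dotProduct_mulVec_pos hCherm fun x hx => ?_
    set y := S⁻¹ *ᵥ x with hy
    have hy0 : y ≠ 0 := by
      intro h
      apply hx
      have hxy : S *ᵥ y = x := by rw [hy, mulVec_mulVec, hinv', one_mulVec]
      rw [← hxy, h, mulVec_zero]
    have hstary : star y = star x ᵥ* S⁻¹ := by
      rw [hy, star_mulVec, hSinvherm.eq]
    have hxy : star x ⬝ᵥ C *ᵥ x = star y ⬝ᵥ H *ᵥ y := by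
      rw [hC, ← mulVec_mulVec, ← mulVec_mulVec, dotProduct_mulVec, ← hstary, ← hy]
    rw [hxy]
    exact hH.dotProduct_mulVec_pos hy0
  have hqRpos : 0 < (star w ⬝ᵥ R.mulVec w).re := by
    exact (Complex.pos_iff.mp (hR.dotProduct_mulVec_pos hw0)).1
  have hH1 := rayleigh_bounds hM hH.1 w
  rw [hw, mul_one, mul_one] at hH1
  have hsumu : ∑ i, ‖u i‖ ^ 2 = (star w ⬝ᵥ R.mulVec w).re := by
    rw [← dot_star_self_re, hqRu]
  have hC1 := rayleigh_bounds hM hCherm u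
  rw [hsumu, hqC] at hC1
  have ht1 : m₁ ≤ (star w ⬝ᵥ H.mulVec w).re / (star w ⬝ᵥ R.mulVec w).re :=
    (le_div_iff₀ hqRpos).2 (by rw [hm₁]; exact hC1.1)
  have ht2 : (star w ⬝ᵥ H.mulVec w).re / (star w ⬝ᵥ R.mulVec w).re ≤ M₁ :=
    (div_le_iff₀ hqRpos).2 (by rw [hM₁]; exact hC1.2)
  have hm₀pos : 0 < m₀ := by
    obtain ⟨i, hi⟩ := exists_eq_ciInf_of_finite (f := hH.1.eigenvalues)
    rw [hm₀, ← hi]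
    exact hH.eigenvalues_pos i
  have hm₁pos : 0 < m₁ := by
    obtain ⟨i, hi⟩ := exists_eq_ciInf_of_finite (f := hCherm.eigenvalues)
    rw [hm₁, ← hi]
    exact hCpos.eigenvalues_pos i
  have hf₀conc : ConcaveOn ℝ (Set.Ioi 0) f₀ := by
    have h := (strictConcaveOn_log_Ioi.concaveOn).smul hα.le
    have heq : f₀ = α • Real.log := funext fun x => by
      rw [hf₀]; simp [smul_eq_mul]
    rw [heq]
    exact h
  have hf₁conc : ConcaveOn ℝ (Set.Ioi 0) f₁ := by
    have h := phi_concaveOn.smul hβ.le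
    have heq : f₁ = β • (fun x => Real.log x + Real.exp x * expIntegralE1 x) :=
      funext fun x => by rw [hf₁]; simp [smul_eq_mul]
    rw [heq]
    exact h
  have h0 := concave_chord_le (t := (star w ⬝ᵥ H.mulVec w).re) hf₀conc (Set.mem_Ioi.2 hm₀pos)
    (Set.mem_Ioi.2 (hm₀pos.trans h₀lt)) h₀lt (by rw [hm₀]; exact hH1.1)
    (by rw [hM₀]; exact hH1.2)
  have h1 := concave_chord_le hf₁conc (Set.mem_Ioi.2 hm₁pos)
    (Set.mem_Ioi.2 (hm₁pos.trans h₁lt)) h₁lt ht1 ht2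
  subst hκ₁ hμ₁ hκ₂ hμ₂
  linarith [h0, h1]
end

section
/- Let T > 0, a > 0, b ≥ 0, c₁ ≥ 0 and c₂ ∈ ℝ. Then the function τ ↦ ((T − τ)/T)·(c₁·Φ(a·√τ + b) + c₂), where Φ(x) = ∫_{−∞}^x (2π)^{−1/2} e^{−u²/2} du is the standard normal cumulative distribution function, is concave on the interval (0, T]. -/
open MeasureTheory Real

/-- The standard normal cumulative distribution function
`Φ(x) = ∫_{−∞}^x (2π)^{−1/2} e^{−u²/2} du`. -/
noncomputable def gaussPhi (x : ℝ) : ℝ :=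
  ∫ u in Set.Iio x, (Real.sqrt (2 * Real.pi))⁻¹ * Real.exp (-u ^ 2 / 2)

/-- The standard normal density. -/
noncomputable def gaussDen (u : ℝ) : ℝ :=
  (Real.sqrt (2 * Real.pi))⁻¹ * Real.exp (-u ^ 2 / 2)

lemma gaussDen_nonneg (u : ℝ) : 0 ≤ gaussDen u :=
  mul_nonneg (inv_nonneg.2 (Real.sqrt_nonneg _)) (Real.exp_nonneg _)

lemma continuous_gaussDen : Continuous gaussDen := by
  unfold gaussDen
  fun_prop

lemma integrable_gaussDen : Integrable gaussDen := by
  have h := (integrable_exp_neg_mul_sq (by norm_num : (0:ℝ) < 1/2)).const_mul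
    (Real.sqrt (2 * Real.pi))⁻¹
  have heq : (fun x : ℝ => (Real.sqrt (2 * Real.pi))⁻¹ * Real.exp (-(1/2 : ℝ) * x ^ 2))
      = gaussDen := by
    funext u; unfold gaussDen; congr 1; ring
  rw [← heq]
  exact h

lemma hasDerivAt_gaussPhi (x : ℝ) : HasDerivAt gaussPhi (gaussDen x) x := by
  have key : gaussPhi = fun y => gaussPhi 0 + ∫ u in (0:ℝ)..y, gaussDen u := by
    funext y
    have h1 : ∀ z : ℝ, gaussPhi z = ∫ u in Set.Iic z, gaussDen u := fun z =>
      (MeasureTheory.integral_Iic_eq_integral_Iio).symm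
    have h2 := intervalIntegral.integral_Iic_sub_Iic
      (integrable_gaussDen.integrableOn (s := Set.Iic 0))
      (integrable_gaussDen.integrableOn (s := Set.Iic y)) (μ := volume)
    rw [h1 y, h1 0]
    linarith [h2]
  rw [key]
  exact (intervalIntegral.integral_hasDerivAt_right
    (integrable_gaussDen.intervalIntegrable)
    (continuous_gaussDen.stronglyMeasurableAtFilter _ _)
    continuous_gaussDen.continuousAt).const_add (gaussPhi 0)

lemma deriv_gaussPhi : deriv gaussPhi = gaussDen :=
  funext fun x => (hasDerivAt_gaussPhi x).deriv

lemma differentiable_gaussPhi : Differentiable ℝ gaussPhi :=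
  fun x => (hasDerivAt_gaussPhi x).differentiableAt

lemma monotone_gaussPhi : Monotone gaussPhi := by
  apply monotone_of_deriv_nonneg differentiable_gaussPhi
  intro x
  rw [deriv_gaussPhi]
  exact gaussDen_nonneg x

lemma concaveOn_gaussPhi : ConcaveOn ℝ (Set.Ici (0:ℝ)) gaussPhi := by
  apply AntitoneOn.concaveOn_of_deriv (convex_Ici 0)
    differentiable_gaussPhi.continuous.continuousOn
    differentiable_gaussPhi.differentiableOn
  rw [deriv_gaussPhi, interior_Ici]
  intro x hx y hy hxy
  unfold gaussDen
  apply mul_le_mul_of_nonneg_left _ (inv_nonneg.2 (Real.sqrt_nonneg _))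
  apply Real.exp_le_exp.2
  have hx0 : (0:ℝ) < x := hx
  nlinarith

/-- Key combination step assuming `x ≤ y`. -/
lemma key_step (T : ℝ) (hT : 0 < T) (G : ℝ → ℝ)
    (hG : ConcaveOn ℝ (Set.Ioc 0 T) G) (hGm : MonotoneOn G (Set.Ioc 0 T))
    {x y p q : ℝ} (hx : x ∈ Set.Ioc (0:ℝ) T) (hy : y ∈ Set.Ioc (0:ℝ) T)
    (hxy : x ≤ y) (hp : 0 ≤ p) (hq : 0 ≤ q) (hpq : p + q = 1) :
    p * ((T - x) / T * G x) + q * ((T - y) / T * G y)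
      ≤ (T - (p * x + q * y)) / T * G (p * x + q * y) := by
  set z := p * x + q * y with hz_def
  have hz : z ∈ Set.Ioc (0:ℝ) T := by
    have := hG.1 hx hy hp hq hpq
    simpa [smul_eq_mul] using this
  have hGz : p * G x + q * G y ≤ G z := by
    have := hG.2 hx hy hp hq hpq
    simpa [smul_eq_mul] using this
  have hlx : 0 ≤ (T - x) / T := div_nonneg (by linarith [hx.2]) hT.le
  have hly : 0 ≤ (T - y) / T := div_nonneg (by linarith [hy.2]) hT.le
  have hlz : 0 ≤ (T - z) / T := div_nonneg (by linarith [hz.2]) hT.le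
  have hl : (T - y) / T ≤ (T - x) / T := by
    gcongr
  have hGxy : G x ≤ G y := hGm hx hy hxy
  have hleq : (T - z) / T = p * ((T - x) / T) + q * ((T - y) / T) := by
    field_simp
    linear_combination (-T) * hpq
  have step1 : p * ((T - x) / T * G x) + q * ((T - y) / T * G y)
      ≤ (p * ((T - x) / T) + q * ((T - y) / T)) * (p * G x + q * G y) := by
    have hq' : q = 1 - p := by linarith
    subst hq'
    nlinarith [mul_nonneg (mul_nonneg hp hq)
      (mul_nonneg (sub_nonneg.2 hl) (sub_nonneg.2 hGxy))]
  have step2 : (p * ((T - x) / T) + q * ((T - y) / T)) * (p * G x + q * G y)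
      ≤ (T - z) / T * G z := by
    rw [hleq]
    exact mul_le_mul_of_nonneg_left hGz (by rw [← hleq]; exact hlz)
  linarith

lemma concave_mul (T : ℝ) (hT : 0 < T) (G : ℝ → ℝ)
    (hG : ConcaveOn ℝ (Set.Ioc 0 T) G) (hGm : MonotoneOn G (Set.Ioc 0 T)) :
    ConcaveOn ℝ (Set.Ioc 0 T) (fun τ => (T - τ) / T * G τ) := by
  refine ⟨hG.1, ?_⟩
  intro x hx y hy p q hp hq hpq
  simp only [smul_eq_mul]
  rcases le_total x y with h | h
  · exact key_step T hT G hG hGm hx hy h hp hq hpq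
  · have := key_step T hT G hG hGm hy hx h hq hp (by linarith)
    calc p * ((T - x) / T * G x) + q * ((T - y) / T * G y)
        = q * ((T - y) / T * G y) + p * ((T - x) / T * G x) := by ring
      _ ≤ (T - (q * y + p * x)) / T * G (q * y + p * x) := this
      _ = (T - (p * x + q * y)) / T * G (p * x + q * y) := by rw [add_comm (q*y)]

/-- Concavity of the interweave sensing objective: for `T, a > 0`, `b ≥ 0`, `c₁ ≥ 0`, `c₂ ∈ ℝ`,
the function `τ ↦ ((T − τ)/T)(c₁ Φ(a√τ + b) + c₂)` is concave on `(0, T]`. -/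
theorem concaveOn_interweave_objective
    (T a b c₁ c₂ : ℝ) (hT : 0 < T) (ha : 0 < a) (hb : 0 ≤ b) (hc₁ : 0 ≤ c₁) :
    ConcaveOn ℝ (Set.Ioc (0 : ℝ) T)
      (fun τ => ((T - τ) / T) * (c₁ * gaussPhi (a * Real.sqrt τ + b) + c₂)) := by
  set G : ℝ → ℝ := fun τ => c₁ * gaussPhi (a * Real.sqrt τ + b) + c₂ with hG_def
  have hsqrt := Real.strictConcaveOn_sqrt.concaveOn
  have harg_mem : ∀ τ : ℝ, 0 ≤ a * Real.sqrt τ + b := fun τ =>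
    add_nonneg (mul_nonneg ha.le (Real.sqrt_nonneg τ)) hb
  have hGm : MonotoneOn G (Set.Ioc 0 T) := by
    intro u hu v hv huv
    have h1 : Real.sqrt u ≤ Real.sqrt v := Real.sqrt_le_sqrt huv
    have h2 : a * Real.sqrt u + b ≤ a * Real.sqrt v + b := by
      have := mul_le_mul_of_nonneg_left h1 ha.le; linarith
    have := monotone_gaussPhi h2
    simp only [hG_def]
    nlinarith
  have hG : ConcaveOn ℝ (Set.Ioc 0 T) G := by
    refine ⟨convex_Ioc 0 T, ?_⟩
    intro x hx y hy p q hp hq hpq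
    simp only [smul_eq_mul, hG_def]
    have hxI : x ∈ Set.Ici (0:ℝ) := le_of_lt hx.1
    have hyI : y ∈ Set.Ici (0:ℝ) := le_of_lt hy.1
    have hsq : p * Real.sqrt x + q * Real.sqrt y ≤ Real.sqrt (p * x + q * y) := by
      have := hsqrt.2 hxI hyI hp hq hpq
      simpa [smul_eq_mul] using this
    have harg : p * (a * Real.sqrt x + b) + q * (a * Real.sqrt y + b)
        ≤ a * Real.sqrt (p * x + q * y) + b := by
      nlinarith
    have hmemx : a * Real.sqrt x + b ∈ Set.Ici (0:ℝ) := harg_mem x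
    have hmemy : a * Real.sqrt y + b ∈ Set.Ici (0:ℝ) := harg_mem y
    have hconc : p * gaussPhi (a * Real.sqrt x + b) + q * gaussPhi (a * Real.sqrt y + b)
        ≤ gaussPhi (p * (a * Real.sqrt x + b) + q * (a * Real.sqrt y + b)) := by
      have := concaveOn_gaussPhi.2 hmemx hmemy hp hq hpq
      simpa [smul_eq_mul] using this
    have hmono := monotone_gaussPhi harg
    have h1 := mul_le_mul_of_nonneg_left (hconc.trans hmono) hc₁
    have h2 : p * c₂ + q * c₂ = c₂ := by linear_combination c₂ * hpq
    nlinarith [h1, h2]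
  exact concave_mul T hT G hG hGm
end
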